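/- Let f(x) = A1 e^{γ1 x} + A2 e^{γ2 x} + A3 e^{−γ3 x} with A1 > 0, A2 > 0, A3 ∈ ℝ and γ1, γ2, γ3 > 0. Suppose a < b are real numbers with f′(a) = 1, f′(b) = r for some r > 1, and f(b) = r·b. Then f′(x) < r for every x ∈ [a, b), and f(x) > r·x for every x ∈ [a, b). -/

import Mathlib

lemma expAux (A c x : ℝ) :
    HasDerivAt (fun y : ℝ => A * Real.exp (c * y)) (A * c * Real.exp (c * x)) x := by
  have h1 : HasDerivAt (fun y : ℝ => c * y) c x := by
    simpa using (hasDerivAt_id x).const_mul c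
  have h2 := (Real.hasDerivAt_exp (c * x)).comp x h1
  have h3 := h2.const_mul A
  have e : A * c * Real.exp (c * x) = A * (Real.exp (c * x) * c) := by ring
  rw [e]; exact h3

/-- If `f'(a) = 1`, `f'(b) = r > 1` and `f(b) = r b` with `a < b`, then
`f' < r` and `f(x) > r x` on `[a, b)`. -/
theorem stmt_9 (A1 A2 A3 γ1 γ2 γ3 a b r : ℝ) (hA1 : 0 < A1) (hA2 : 0 < A2)
    (hγ1 : 0 < γ1) (hγ2 : 0 < γ2) (hγ3 : 0 < γ3)
    (f : ℝ → ℝ)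
    (hf : ∀ x : ℝ, f x = A1 * Real.exp (γ1 * x) + A2 * Real.exp (γ2 * x)
      + A3 * Real.exp (-γ3 * x))
    (hab : a < b) (hr : 1 < r)
    (hfa : deriv f a = 1) (hfb : deriv f b = r) (hfbval : f b = r * b) :
    (∀ x ∈ Set.Ico a b, deriv f x < r) ∧ ∀ x ∈ Set.Ico a b, r * x < f x := by
  have hfeq : f = fun x => A1 * Real.exp (γ1 * x) + A2 * Real.exp (γ2 * x)
      + A3 * Real.exp (-γ3 * x) := funext hf
  subst hfeq
  set g : ℝ → ℝ := fun x => A1 * γ1 * Real.exp (γ1 * x) + A2 * γ2 * Real.exp (γ2 * x)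
      - A3 * γ3 * Real.exp (-γ3 * x) with hgdef
  have hF : ∀ x : ℝ, HasDerivAt (fun y : ℝ => A1 * Real.exp (γ1 * y) + A2 * Real.exp (γ2 * y)
      + A3 * Real.exp (-γ3 * y)) (g x) x := by
    intro x
    have h := ((expAux A1 γ1 x).add (expAux A2 γ2 x)).add (expAux A3 (-γ3) x)
    have e : g x = A1 * γ1 * Real.exp (γ1 * x) + A2 * γ2 * Real.exp (γ2 * x) + A3 * -γ3 * Real.exp (-γ3 * x) := by
      simp only [hgdef]; ring
    rw [e]; exact h
  have hdf : ∀ x : ℝ, deriv (fun y : ℝ => A1 * Real.exp (γ1 * y) + A2 * Real.exp (γ2 * y)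
      + A3 * Real.exp (-γ3 * y)) x = g x := fun x => (hF x).deriv
  rw [hdf] at hfa hfb
  -- the function ψ and its derivative
  set u : ℝ → ℝ := fun x => A1 * γ1 * (γ1 + γ3) * Real.exp (γ1 * x)
      + A2 * γ2 * (γ2 + γ3) * Real.exp (γ2 * x) - r * γ3 with hudef
  set ψ : ℝ → ℝ := fun x => (g x - r) * Real.exp (γ3 * x) with hψdef
  have hG : ∀ x : ℝ, HasDerivAt g
      (A1 * γ1 * γ1 * Real.exp (γ1 * x) + A2 * γ2 * γ2 * Real.exp (γ2 * x)
        - A3 * γ3 * -γ3 * Real.exp (-γ3 * x)) x := fun x =>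
    ((expAux (A1 * γ1) γ1 x).add (expAux (A2 * γ2) γ2 x)).sub (expAux (A3 * γ3) (-γ3) x)
  have hΨ : ∀ x : ℝ, HasDerivAt ψ (Real.exp (γ3 * x) * u x) x := by
    intro x
    have h1 := ((hG x).sub_const r).mul (expAux 1 γ3 x)
    have h2 : HasDerivAt ψ
        ((A1 * γ1 * γ1 * Real.exp (γ1 * x) + A2 * γ2 * γ2 * Real.exp (γ2 * x)
          - A3 * γ3 * -γ3 * Real.exp (-γ3 * x)) * (1 * Real.exp (γ3 * x))
         + (g x - r) * (1 * γ3 * Real.exp (γ3 * x))) x := by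
      simp only [one_mul] at h1 ⊢; exact h1
    convert h2 using 1
    simp only [hudef, hgdef]
    ring
  have hu : StrictMono u := by
    intro x y hxy
    have h1 : Real.exp (γ1 * x) < Real.exp (γ1 * y) :=
      Real.exp_lt_exp.mpr (by nlinarith)
    have h2 : Real.exp (γ2 * x) < Real.exp (γ2 * y) :=
      Real.exp_lt_exp.mpr (by nlinarith)
    simp only [hudef]
    nlinarith [mul_pos (mul_pos (mul_pos hA1 hγ1) (add_pos hγ1 hγ3)) (sub_pos.mpr h1),
      mul_pos (mul_pos (mul_pos hA2 hγ2) (add_pos hγ2 hγ3)) (sub_pos.mpr h2)]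
  have hψb : ψ b = 0 := by simp [hψdef, hfb]
  have hψa : ψ a < 0 := by
    have : g a - r < 0 := by rw [hfa]; linarith
    exact mul_neg_of_neg_of_pos this (Real.exp_pos _)
  -- main claim : g < r on [a, b)
  have key : ∀ x ∈ Set.Ico a b, g x < r := by
    intro c hc
    by_contra hge
    push_neg at hge
    have hψc : 0 ≤ ψ c := mul_nonneg (by linarith) (Real.exp_pos _).le
    have hac : a < c := by
      rcases eq_or_lt_of_le hc.1 with h | h
      · exfalso; rw [← h, hfa] at hge; linarith
      · exact h
    obtain ⟨t, ht, hslope⟩ := exists_hasDerivAt_eq_slope ψ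
      (fun x => Real.exp (γ3 * x) * u x) hac
      (fun x _ => (hΨ x).continuousAt.continuousWithinAt)
      (fun x _ => hΨ x)
    have hslope_pos : 0 < Real.exp (γ3 * t) * u t := by
      rw [hslope]
      apply div_pos (by linarith) (by linarith)
    have hut : 0 < u t := by
      by_contra hut
      push_neg at hut
      nlinarith [Real.exp_pos (γ3 * t)]
    have hmono : StrictMonoOn ψ (Set.Icc t b) := by
      apply strictMonoOn_of_deriv_pos (convex_Icc t b)
        (fun x _ => (hΨ x).continuousAt.continuousWithinAt)
      intro s hs
      rw [interior_Icc] at hs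
      rw [(hΨ s).deriv]
      exact mul_pos (Real.exp_pos _) (lt_trans hut (hu hs.1))
    have hcb : ψ c < ψ b :=
      hmono (Set.mem_Icc.mpr ⟨ht.2.le, hc.2.le⟩)
        (Set.mem_Icc.mpr ⟨(lt_trans ht.2 hc.2).le.trans (le_refl b), le_refl b⟩) hc.2
    rw [hψb] at hcb
    linarith
  constructor
  · intro x hx
    rw [hdf]
    exact key x hx
  · intro x hx
    set h : ℝ → ℝ := fun y => (A1 * Real.exp (γ1 * y) + A2 * Real.exp (γ2 * y)
        + A3 * Real.exp (-γ3 * y)) - r * y with hhdef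
    have hH : ∀ y : ℝ, HasDerivAt h (g y - r) y := by
      intro y
      have := (hF y).sub ((hasDerivAt_id y).const_mul r)
      rw [mul_one] at this; exact this
    have hanti : StrictAntiOn h (Set.Icc x b) := by
      apply strictAntiOn_of_deriv_neg (convex_Icc x b)
        (fun y _ => (hH y).continuousAt.continuousWithinAt)
      intro s hs
      rw [interior_Icc] at hs
      rw [(hH s).deriv]
      have : g s < r := key s ⟨hx.1.trans hs.1.le, hs.2⟩
      linarith
    have hxb : x < b := hx.2
    have := hanti (Set.mem_Icc.mpr ⟨le_refl x, hxb.le⟩) (Set.mem_Icc.mpr ⟨hxb.le, le_refl b⟩) hxb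
    have hfb' : A1 * Real.exp (γ1 * b) + A2 * Real.exp (γ2 * b)
        + A3 * Real.exp (-γ3 * b) = r * b := hfbval
    have hhb : h b = 0 := by simp only [hhdef]; rw [hfb', sub_self]
    rw [hhb] at this
    simp only [hhdef] at this
    show r * x < A1 * Real.exp (γ1 * x) + A2 * Real.exp (γ2 * x) + A3 * Real.exp (-γ3 * x)
    linarith
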